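/- Let a be a monic Hurwitz real polynomial of degree n ≥ 2. If (x₁,…,x_{n-1}) ∈ Ω^W_{1a}, then there exists ε₀ > 0 such that for all 0 < ε < ε₀, the shifted point (x₁−ε, x₂−ε, …, x_{n-1}−ε) also belongs to Ω^W_{1a}. In particular, no point of Ω^W_{1a} is isolated, and the intersection of finitely many weak SPR regions is never a single point. -/

import Mathlib

open Polynomial Filter Bornology Topology

lemma term_tendsto (c : ℂ) (k d : ℕ) (hk : k ≤ d) :
    Filter.Tendsto (fun z : ℂ => c * z ^ k / z ^ d) (Bornology.cobounded ℂ)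
      (nhds (if k = d then c else 0)) := by
  have hne : ∀ᶠ z : ℂ in cobounded ℂ, z ≠ 0 := by
    filter_upwards [eventually_cobounded_le_norm (1 : ℝ)] with z hz
    intro h; rw [h] at hz; simp at hz; linarith
  by_cases hkd : k = d
  · subst hkd
    simp only [if_pos rfl]
    refine Tendsto.congr' ?_ tendsto_const_nhds
    filter_upwards [hne] with z hz
    rw [mul_div_assoc, div_self (pow_ne_zero _ hz), mul_one]; simp
  · have hklt : k < d := lt_of_le_of_ne hk hkd
    simp only [if_neg hkd]
    have h0 : Tendsto (fun w : ℂ => c * w ^ (d - k)) (nhds 0) (nhds 0) := by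
      have : Continuous (fun w : ℂ => c * w ^ (d - k)) :=
        continuous_const.mul (continuous_pow (d - k))
      simpa [zero_pow (Nat.sub_ne_zero_of_lt hklt)] using this.tendsto (0 : ℂ)
    refine Tendsto.congr' ?_ (h0.comp tendsto_inv₀_cobounded)
    filter_upwards [hne] with z hz
    have h1 : z ^ k / z ^ d = (z ^ (d - k))⁻¹ := by
      rw [inv_eq_one_div, div_eq_div_iff (pow_ne_zero _ hz) (pow_ne_zero _ hz), one_mul,
        ← pow_add]
      congr 1; omega
    simp only [Function.comp, inv_pow]
    rw [← h1, mul_div_assoc]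

lemma poly_tendsto (P : Polynomial ℂ) (d : ℕ) (hd : P.natDegree < d + 1) :
    Filter.Tendsto (fun z : ℂ => P.eval z / z ^ d) (Bornology.cobounded ℂ)
      (nhds (P.coeff d)) := by
  have hsum : Tendsto (fun z : ℂ => ∑ k ∈ Finset.range (d+1), P.coeff k * z ^ k / z ^ d)
      (cobounded ℂ) (nhds (∑ k ∈ Finset.range (d+1), if k = d then P.coeff k else 0)) :=
    tendsto_finset_sum _ (fun k hk =>
      term_tendsto (P.coeff k) k d (Nat.lt_succ_iff.mp (Finset.mem_range.mp hk)))
  have hval : (∑ k ∈ Finset.range (d+1), if k = d then P.coeff k else 0) = P.coeff d := by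
    rw [Finset.sum_ite_eq' (Finset.range (d+1)) d (fun k => P.coeff k)]
    simp
  rw [hval] at hsum
  refine hsum.congr' ?_
  filter_upwards with z
  rw [P.eval_eq_sum_range' hd z, Finset.sum_div]

noncomputable def evalI (p : Polynomial ℝ) (ω : ℝ) : ℂ :=
  (p.map (algebraMap ℝ ℂ)).eval ((ω : ℂ) * Complex.I)

noncomputable def evalNegI (p : Polynomial ℝ) (ω : ℝ) : ℂ :=
  (p.map (algebraMap ℝ ℂ)).eval (-((ω : ℂ) * Complex.I))

def Hurwitz (p : Polynomial ℝ) : Prop :=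
  ∀ z : ℂ, (p.map (algebraMap ℝ ℂ)).eval z = 0 → z.re < 0

lemma evalI_tendsto (p : Polynomial ℝ) (d : ℕ) (hd : p.natDegree < d + 1) :
    Filter.Tendsto (fun ω : ℝ => evalI p ω / ((ω:ℂ) * Complex.I) ^ d)
      (Bornology.cobounded ℝ) (nhds ((p.coeff d : ℂ))) := by
  have hmap : Tendsto (fun ω : ℝ => (ω:ℂ) * Complex.I) (cobounded ℝ) (cobounded ℂ) := by
    rw [← tendsto_norm_atTop_iff_cobounded]
    have : (fun ω : ℝ => ‖(ω:ℂ) * Complex.I‖) = fun ω : ℝ => ‖ω‖ := by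
      funext ω; simp
    rw [this]
    exact tendsto_norm_cobounded_atTop
  have hco : (p.map (algebraMap ℝ ℂ)).natDegree < d + 1 :=
    lt_of_le_of_lt natDegree_map_le hd
  have h := (poly_tendsto (p.map (algebraMap ℝ ℂ)) d hco).comp hmap
  simpa [evalI, Function.comp_def, Polynomial.coeff_map] using h

lemma evalI_continuous (p : Polynomial ℝ) : Continuous (evalI p) :=
  (p.map (algebraMap ℝ ℂ)).continuous.comp (Complex.continuous_ofReal.mul continuous_const)

theorem stmt16 (m : ℕ) (a : Polynomial ℝ) (ha : Hurwitz a)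
    (hmona : a.Monic) (hdega : a.natDegree = m + 2)
    (x : Fin (m+1) → ℝ)
    (hx : ∀ ω : ℝ,
      0 < (evalI (Polynomial.X ^ (m+1) +
            ∑ i : Fin (m+1), Polynomial.C (x i) * Polynomial.X ^ (m + 1 - ((i : ℕ) + 1))) ω
          / evalI a ω).re) :
    ∃ ε₀ : ℝ, 0 < ε₀ ∧ ∀ ε : ℝ, 0 < ε → ε < ε₀ →
      ∀ ω : ℝ,
        0 < (evalI (Polynomial.X ^ (m+1) +
              ∑ i : Fin (m+1), Polynomial.C (x i - ε) * Polynomial.X ^ (m + 1 - ((i : ℕ) + 1))) ω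
            / evalI a ω).re := by
  classical
  set P : Polynomial ℝ := Polynomial.X ^ (m+1) +
      ∑ i : Fin (m+1), Polynomial.C (x i) * Polynomial.X ^ (m + 1 - ((i : ℕ) + 1)) with hP
  set Q : Polynomial ℝ :=
      ∑ i : Fin (m+1), Polynomial.X ^ (m + 1 - ((i : ℕ) + 1)) with hQ
  -- a(iω) ≠ 0
  have hA : ∀ ω : ℝ, evalI a ω ≠ 0 := by
    intro ω h
    have := ha _ h
    simp [Complex.mul_re] at this
  -- the perturbed polynomial is P - ε Q
  have hsub : ∀ (ε : ℝ) (ω : ℝ),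
      evalI (Polynomial.X ^ (m+1) +
        ∑ i : Fin (m+1), Polynomial.C (x i - ε) * Polynomial.X ^ (m + 1 - ((i : ℕ) + 1))) ω
      = evalI P ω - (ε : ℂ) * evalI Q ω := by
    intro ε ω
    have hpoly : (Polynomial.X ^ (m+1) +
        ∑ i : Fin (m+1), Polynomial.C (x i - ε) * Polynomial.X ^ (m + 1 - ((i : ℕ) + 1)))
        = P - Polynomial.C ε * Q := by
      rw [hP, hQ, Finset.mul_sum, add_sub_assoc, ← Finset.sum_sub_distrib]
      congr 1
      refine Finset.sum_congr rfl (fun i _ => ?_)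
      rw [map_sub, sub_mul]
    rw [hpoly]
    simp [evalI, Polynomial.map_sub, Polynomial.map_mul, Polynomial.map_C]
  set f : ℝ → ℝ := fun ω => (evalI P ω / evalI a ω).re with hf
  set g : ℝ → ℝ := fun ω => (evalI Q ω / evalI a ω).re with hg
  have hre : ∀ (ε : ℝ) (ω : ℝ),
      (evalI (Polynomial.X ^ (m+1) +
        ∑ i : Fin (m+1), Polynomial.C (x i - ε) * Polynomial.X ^ (m + 1 - ((i : ℕ) + 1))) ω
        / evalI a ω).re = f ω - ε * g ω := by
    intro ε ω
    rw [hsub, sub_div, mul_div_assoc, Complex.sub_re, Complex.re_ofReal_mul]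
  -- asymptotics
  have hacoeff : (a.coeff (m+2) : ℂ) = 1 := by
    rw [show a.coeff (m+2) = a.leadingCoeff by rw [leadingCoeff, hdega], hmona.leadingCoeff]
    norm_num
  have TA : Tendsto (fun ω : ℝ => evalI a ω / ((ω:ℂ) * Complex.I) ^ (m+2))
      (cobounded ℝ) (nhds 1) := by
    have := evalI_tendsto a (m+2) (by omega)
    rwa [hacoeff] at this
  have hQdeg : Q.natDegree < m + 1 := by
    have : Q.natDegree ≤ m :=
      natDegree_sum_le_of_forall_le _ _ (fun i _ => by
        rw [natDegree_X_pow]; omega)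
    omega
  have hQcoeff : (Q.coeff m : ℂ) = 1 := by
    have : Q.coeff m = 1 := by
      rw [hQ, finset_sum_coeff]
      rw [Fin.sum_univ_eq_sum_range (fun i => (Polynomial.X ^ (m + 1 - (i + 1)) :
        Polynomial ℝ).coeff m)]
      have : ∀ i ∈ Finset.range (m+1),
          ((Polynomial.X : Polynomial ℝ) ^ (m + 1 - (i + 1))).coeff m
          = if i = 0 then 1 else 0 := by
        intro i hi
        rw [coeff_X_pow]
        have hi' := Finset.mem_range.mp hi
        by_cases h0 : i = 0
        · subst h0; simp
        · rw [if_neg (by omega), if_neg h0]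
      rw [Finset.sum_congr rfl this, Finset.sum_ite_eq' (Finset.range (m+1)) 0 (fun _ => (1:ℝ))]
      simp
    rw [this]; norm_num
  have TQ : Tendsto (fun ω : ℝ => evalI Q ω / ((ω:ℂ) * Complex.I) ^ m)
      (cobounded ℝ) (nhds 1) := by
    have := evalI_tendsto Q m hQdeg
    rwa [hQcoeff] at this
  have TB : Tendsto (fun ω : ℝ => (evalI Q ω / ((ω:ℂ) * Complex.I) ^ m) *
      (evalI a ω / ((ω:ℂ) * Complex.I) ^ (m+2))⁻¹) (cobounded ℝ) (nhds 1) := by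
    have := TQ.mul (TA.inv₀ one_ne_zero)
    simpa using this
  have TRe : Tendsto (fun ω : ℝ => ((evalI Q ω / ((ω:ℂ) * Complex.I) ^ m) *
      (evalI a ω / ((ω:ℂ) * Complex.I) ^ (m+2))⁻¹).re) (cobounded ℝ) (nhds 1) := by
    have : (1 : ℝ) = (1 : ℂ).re := by norm_num
    rw [this]
    exact (Complex.continuous_re.tendsto 1).comp TB
  have hgev : ∀ᶠ ω in cobounded ℝ, g ω ≤ 0 := by
    filter_upwards [TRe.eventually (eventually_gt_nhds (by norm_num : (0:ℝ) < 1)),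
      eventually_cobounded_le_norm (1 : ℝ)] with ω hB hω1
    have hω : (ω : ℂ) ≠ 0 := by
      simp only [Real.norm_eq_abs] at hω1
      exact_mod_cast (by intro h; rw [h] at hω1; simp at hω1; linarith : ω ≠ 0)
    have hωr : ω ≠ 0 := by exact_mod_cast hω
    have hBA : (evalI Q ω / ((ω:ℂ) * Complex.I) ^ m) *
        (evalI a ω / ((ω:ℂ) * Complex.I) ^ (m+2))⁻¹
        = ((-(ω^2) : ℝ) : ℂ) * (evalI Q ω / evalI a ω) := by
      have hzI : ((ω:ℂ) * Complex.I) ≠ 0 := mul_ne_zero hω Complex.I_ne_zero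
      have hz2 : ((ω:ℂ) * Complex.I) ^ 2 = ((-(ω^2) : ℝ) : ℂ) := by
        rw [mul_pow, Complex.I_sq]; push_cast; ring
      rw [inv_div, div_mul_div_comm, pow_add, ← hz2,
        show evalI Q ω * (((ω:ℂ) * Complex.I) ^ m * ((ω:ℂ) * Complex.I) ^ 2)
          = ((ω:ℂ) * Complex.I) ^ m * (evalI Q ω * ((ω:ℂ) * Complex.I) ^ 2) by ring,
        mul_div_mul_left _ _ (pow_ne_zero m hzI), mul_comm (evalI Q ω), mul_div_assoc]
    rw [hBA, Complex.re_ofReal_mul] at hB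
    have hsq : (0:ℝ) < ω^2 := by positivity
    nlinarith [hB]
  -- extract a radius R
  rw [← comap_norm_atTop, eventually_comap, eventually_atTop] at hgev
  obtain ⟨R, hR⟩ := hgev
  have hglarge : ∀ ω : ℝ, R ≤ |ω| → g ω ≤ 0 := by
    intro ω hω
    exact hR |ω| hω ω (Real.norm_eq_abs ω)
  -- compact part
  set R' : ℝ := max R 0 with hR'
  have h0K : (0:ℝ) ∈ Set.Icc (-R') R' := by
    constructor <;> simp [hR', le_max_right]
  have hfc : Continuous f :=
    Complex.continuous_re.comp (((evalI_continuous P).div (evalI_continuous a) hA))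
  have hgc : Continuous g :=
    Complex.continuous_re.comp (((evalI_continuous Q).div (evalI_continuous a) hA))
  obtain ⟨ωM, hωM, hmin⟩ := isCompact_Icc.exists_isMinOn ⟨0, h0K⟩ hfc.continuousOn
  obtain ⟨ωN, hωN, hmax⟩ := isCompact_Icc.exists_isMaxOn ⟨0, h0K⟩ hgc.continuousOn
  set M : ℝ := f ωM with hM
  set N : ℝ := max (g ωN) 0 with hN
  have hMpos : 0 < M := hx ωM
  have hNnn : 0 ≤ N := le_max_right _ _
  refine ⟨M / (N + 1), by positivity, ?_⟩
  intro ε hε hεε ω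
  rw [hre]
  have hfω : 0 < f ω := hx ω
  by_cases hcase : |ω| ≤ R'
  · have hmem : ω ∈ Set.Icc (-R') R' := by
      rw [Set.mem_Icc]; constructor <;> [linarith [abs_le.mp hcase |>.1]; exact (abs_le.mp hcase).2]
    have h1 : M ≤ f ω := hmin hmem
    have h2 : g ω ≤ N := le_trans (hmax hmem) (le_max_left _ _)
    have hkey : ε * (N + 1) < M := by
      rw [← lt_div_iff₀ (by positivity : (0:ℝ) < N + 1)]
      exact hεε
    nlinarith [mul_le_mul_of_nonneg_left h2 hε.le]
  · push_neg at hcase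
    have hg0 : g ω ≤ 0 := hglarge ω (le_trans (le_max_left R 0) hcase.le)
    nlinarith [mul_nonpos_of_nonneg_of_nonpos hε.le hg0]
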